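/- arXiv:math/0612616 — 2 statements merged into one kernel-verified Lean document; each statement's English description precedes it below -/
import Mathlib

section
/- (Sprague–Grundy Theorem) For every impartial game G there exists a natural number m such that G is equivalent (up to normal-play game equivalence) to the Nim-heap *m. -/
universe u

namespace SetTheory

/-- Pre-games, as in the older Mathlib (`SetTheory.PGame`, since removed from Mathlib). -/
inductive PGame : Type (u + 1)
  | mk : ∀ α β : Type u, (α → PGame) → (β → PGame) → PGame

namespace PGame

/-- The pair `(x ≤ y, x ⧏ y)`, defined by simultaneous recursion as in the older Mathlib. -/
noncomputable def leLF (x : PGame.{u}) : PGame.{u} → Prop × Prop :=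
  PGame.rec (motive := fun _ => PGame.{u} → Prop × Prop)
    (fun _ _ _ _ ihxL ihxR y =>
      PGame.rec (motive := fun _ => Prop × Prop)
        (fun yl yr yL yR ihyL ihyR =>
          ((∀ i, (ihxL i (mk yl yr yL yR)).2) ∧ ∀ j, (ihyR j).2,
           (∃ i, (ihyL i).1) ∨ ∃ j, (ihxR j (mk yl yr yL yR)).1)) y) x

noncomputable instance : LE PGame.{u} := ⟨fun x y => (leLF x y).1⟩

/-- Game equivalence: `x ≤ y ∧ y ≤ x`. -/
def Equiv (x y : PGame.{u}) : Prop := x ≤ y ∧ y ≤ x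

instance : HasEquiv PGame.{u} := ⟨Equiv⟩

/-- Negation swaps the roles of the players. -/
noncomputable def neg : PGame.{u} → PGame.{u}
  | mk l r L R => mk r l (fun i => neg (R i)) (fun i => neg (L i))

noncomputable instance : Neg PGame.{u} := ⟨neg⟩

/-- Auxiliary predicate for impartiality, as in the older Mathlib. -/
def ImpartialAux : PGame.{u} → Prop
  | mk l r L R => (mk l r L R ≈ -mk l r L R) ∧ (∀ i, ImpartialAux (L i)) ∧ ∀ j, ImpartialAux (R j)

/-- A game is impartial if it is equivalent to its negative, and so are all its options. -/
class Impartial (G : PGame.{u}) : Prop where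
  out : ImpartialAux G

/-- Short games: finitely many options, all of them short. -/
class inductive Short : PGame.{u} → Type (u + 1)
  | mk :
    ∀ {α β : Type u} {L : α → PGame.{u}} {R : β → PGame.{u}} (_ : ∀ i : α, Short (L i))
      (_ : ∀ j : β, Short (R j)) [Fintype α] [Fintype β] [DecidableEq α] [DecidableEq β],
      Short (mk α β L R)

/-- The nim game `nim o`, whose options are `nim a` for all `a < o`. -/
noncomputable def nim (o : Ordinal.{u}) : PGame.{u} :=
  mk o.ToType o.ToType (fun x => nim (Ordinal.ToType.toOrd x).1)
    (fun x => nim (Ordinal.ToType.toOrd x).1)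
termination_by o
decreasing_by all_goals exact (Ordinal.ToType.toOrd _).2

end PGame

end SetTheory

open SetTheory PGame


namespace SetTheory.PGame

def LeftMoves : PGame.{u} → Type u
  | mk l _ _ _ => l

def RightMoves : PGame.{u} → Type u
  | mk _ r _ _ => r

def moveLeft : (x : PGame.{u}) → x.LeftMoves → PGame.{u}
  | mk _ _ L _ => L

def moveRight : (x : PGame.{u}) → x.RightMoves → PGame.{u}
  | mk _ _ _ R => R

def LF (x y : PGame.{u}) : Prop := (leLF x y).2

theorem le_iff' (x y : PGame.{u}) :
    x ≤ y ↔ (∀ i, LF (x.moveLeft i) y) ∧ ∀ j, LF x (y.moveRight j) := by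
  cases x; cases y; exact Iff.rfl

theorem lf_iff' (x y : PGame.{u}) :
    LF x y ↔ (∃ i, x ≤ y.moveLeft i) ∨ ∃ j, x.moveRight j ≤ y := by
  cases x; cases y; exact Iff.rfl

theorem equiv_iff' (x y : PGame.{u}) : x ≈ y ↔ x ≤ y ∧ y ≤ x := Iff.rfl

theorem not_le_iff_aux : ∀ x y : PGame.{u}, (¬ x ≤ y ↔ LF y x) ∧ (¬ y ≤ x ↔ LF x y) := by
  intro x
  induction x with
  | mk xl xr xL xR IHxl IHxr =>
  intro y
  induction y with
  | mk yl yr yL yR IHyl IHyr =>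
  constructor
  · rw [le_iff', lf_iff']
    simp only [moveLeft, moveRight]
    exact not_and_or.trans (or_congr
      (not_forall.trans (exists_congr fun i => not_iff_comm.1 (IHxl i (mk yl yr yL yR)).2))
      (not_forall.trans (exists_congr fun j => not_iff_comm.1 (IHyr j).2)))
  · rw [le_iff', lf_iff']
    simp only [moveLeft, moveRight]
    exact not_and_or.trans (or_congr
      (not_forall.trans (exists_congr fun i => not_iff_comm.1 (IHyl i).1))
      (not_forall.trans (exists_congr fun j => not_iff_comm.1 (IHxr j (mk yl yr yL yR)).1)))

theorem lf_iff_not_le (x y : PGame.{u}) : LF x y ↔ ¬ y ≤ x :=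
  (not_le_iff_aux y x).1.symm

theorem le_refl' (x : PGame.{u}) : x ≤ x := by
  induction x with
  | mk xl xr xL xR IHl IHr =>
  refine (le_iff' _ _).2 ⟨fun i => ?_, fun j => ?_⟩
  · exact (lf_iff' _ _).2 (Or.inl ⟨i, IHl i⟩)
  · exact (lf_iff' _ _).2 (Or.inr ⟨j, IHr j⟩)

theorem le_trans_aux {x y z : PGame.{u}}
    (h₁ : ∀ i, y ≤ z → z ≤ x.moveLeft i → y ≤ x.moveLeft i)
    (h₂ : ∀ j, z.moveRight j ≤ x → x ≤ y → z.moveRight j ≤ y) (hxy : x ≤ y) (hyz : y ≤ z) :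
    x ≤ z := by
  have hxy' := (le_iff' x y).1 hxy
  have hyz' := (le_iff' y z).1 hyz
  refine (le_iff' x z).2 ⟨fun i => ?_, fun j => ?_⟩
  · exact (lf_iff_not_le _ _).2 fun h => (lf_iff_not_le _ _).1 (hxy'.1 i) (h₁ i hyz h)
  · exact (lf_iff_not_le _ _).2 fun h => (lf_iff_not_le _ _).1 (hyz'.2 j) (h₂ j h hxy)

theorem le_trans3 : ∀ x y z : PGame.{u},
    (x ≤ y → y ≤ z → x ≤ z) ∧ (y ≤ z → z ≤ x → y ≤ x) ∧ (z ≤ x → x ≤ y → z ≤ y) := by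
  intro x
  induction x with
  | mk xl xr xL xR IHxl IHxr =>
  intro y
  induction y with
  | mk yl yr yL yR IHyl IHyr =>
  intro z
  induction z with
  | mk zl zr zL zR IHzl IHzr =>
  exact ⟨le_trans_aux (fun i => (IHxl i _ _).2.1) (fun j => (IHzr j).2.2),
    le_trans_aux (fun i => (IHyl i _).2.2) (fun j => (IHxr j _ _).1),
    le_trans_aux (fun i => (IHzl i).1) (fun j => (IHyr j _).2.1)⟩

theorem le_trans' {x y z : PGame.{u}} (h₁ : x ≤ y) (h₂ : y ≤ z) : x ≤ z :=
  (le_trans3 x y z).1 h₁ h₂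

theorem neg_mk (l r : Type u) (L : l → PGame.{u}) (R : r → PGame.{u}) :
    -(mk l r L R) = mk r l (fun j => -(R j)) (fun i => -(L i)) := rfl

theorem neg_le_lf_iff : ∀ x y : PGame.{u},
    (-y ≤ -x ↔ x ≤ y) ∧ (LF (-y) (-x) ↔ LF x y) := by
  intro x
  induction x with
  | mk xl xr xL xR IHxl IHxr =>
  intro y
  induction y with
  | mk yl yr yL yR IHyl IHyr =>
  rw [neg_mk, neg_mk]
  constructor
  · rw [le_iff', le_iff']
    simp only [moveLeft, moveRight]
    exact and_comm.trans (and_congr (forall_congr' fun i => (IHxl i (mk yl yr yL yR)).2)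
      (forall_congr' fun j => (IHyr j).2))
  · rw [lf_iff', lf_iff']
    simp only [moveLeft, moveRight]
    exact or_comm.trans (or_congr (exists_congr fun i => (IHyl i).1)
      (exists_congr fun j => (IHxr j (mk yl yr yL yR)).1))

theorem neg_nim (o : Ordinal.{u}) : -nim o = nim o := by
  induction o using Ordinal.induction with
  | _ o ih =>
  rw [nim.eq_1 o, neg_mk]
  congr 1 <;> funext x <;> exact ih _ (Ordinal.ToType.toOrd x).2

theorem nim_moveLeft (o : Ordinal.{u}) :
    ∀ i : (nim o).LeftMoves, ∃ a < o, (nim o).moveLeft i = nim a := by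
  rw [nim.eq_1 o]
  intro i
  exact ⟨_, (Ordinal.ToType.toOrd i).2, rfl⟩

theorem nim_moveRight (o : Ordinal.{u}) :
    ∀ j : (nim o).RightMoves, ∃ a < o, (nim o).moveRight j = nim a := by
  rw [nim.eq_1 o]
  intro j
  exact ⟨_, (Ordinal.ToType.toOrd j).2, rfl⟩

theorem nim_moveLeft_surj (o a : Ordinal.{u}) (h : a < o) :
    ∃ i : (nim o).LeftMoves, (nim o).moveLeft i = nim a := by
  rw [nim.eq_1 o]
  exact ⟨Ordinal.ToType.mk ⟨a, h⟩, by simp [moveLeft]⟩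

theorem nim_moveRight_surj (o a : Ordinal.{u}) (h : a < o) :
    ∃ j : (nim o).RightMoves, (nim o).moveRight j = nim a := by
  rw [nim.eq_1 o]
  exact ⟨Ordinal.ToType.mk ⟨a, h⟩, by simp [moveRight]⟩

theorem nim_not_le_of_lt (a b : Ordinal.{u}) (h : a < b) :
    ¬ nim b ≤ nim a ∧ ¬ nim a ≤ nim b := by
  constructor
  · intro hle
    obtain ⟨i, hi⟩ := nim_moveLeft_surj b a h
    have := ((le_iff' _ _).1 hle).1 i
    rw [hi, lf_iff_not_le] at this
    exact this (le_refl' _)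
  · intro hle
    obtain ⟨j, hj⟩ := nim_moveRight_surj b a h
    have := ((le_iff' _ _).1 hle).2 j
    rw [hj, lf_iff_not_le] at this
    exact this (le_refl' _)

theorem nim_not_le (a b : ℕ) (h : a ≠ b) : ¬ nim (a : Ordinal.{u}) ≤ nim (b : Ordinal.{u}) := by
  rcases lt_or_gt_of_ne h with h' | h'
  · exact (nim_not_le_of_lt a b (by exact_mod_cast h')).2
  · exact (nim_not_le_of_lt b a (by exact_mod_cast h')).1

theorem nat_of_lt (n : ℕ) (a : Ordinal.{u}) (h : a < n) : ∃ k : ℕ, k < n ∧ a = k := by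
  obtain ⟨k, rfl⟩ := Ordinal.lt_omega0.1 (lt_trans h (Ordinal.nat_lt_omega0 n))
  exact ⟨k, by exact_mod_cast h, rfl⟩

theorem sg_aux : ∀ G : PGame.{0}, ImpartialAux G → Short G →
    ∃ m : ℕ, G ≈ nim (m : Ordinal) := by
  classical
  intro G
  induction G with
  | mk l r L R IHl IHr =>
  intro hI hS
  rw [ImpartialAux] at hI
  obtain ⟨hneg, hIL, _⟩ := hI
  cases hS with
  | mk sL sR =>
  choose f hf using fun i => IHl i (hIL i) (sL i)
  have hex : ∃ n : ℕ, ∀ i, f i ≠ n := by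
    obtain ⟨b, hb⟩ := (Set.finite_range f).bddAbove
    refine ⟨b + 1, fun i h => ?_⟩
    have := hb ⟨i, rfl⟩
    omega
  set n := Nat.find hex with hn
  have hspec : ∀ i, f i ≠ n := Nat.find_spec hex
  have hmin : ∀ k : ℕ, k < n → ∃ i, f i = k := by
    intro k hk
    have := Nat.find_min hex hk
    push_neg at this
    exact this
  have hG : mk l r L R ≤ nim (n : Ordinal) := by
    refine (le_iff' _ _).2 ⟨fun i => ?_, fun j => ?_⟩
    · rw [lf_iff_not_le]
      intro h
      exact nim_not_le n (f i) (Ne.symm (hspec i)) (le_trans' h ((equiv_iff' _ _).1 (hf i)).1)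
    · obtain ⟨a, ha, hj⟩ := nim_moveRight _ j
      obtain ⟨k, hk, rfl⟩ := nat_of_lt n a ha
      obtain ⟨i, hi⟩ := hmin k hk
      rw [hj, lf_iff_not_le]
      intro h
      have h1 : -mk l r L R ≤ -nim (k : Ordinal) := (neg_le_lf_iff (nim (k : Ordinal)) _).1.2 h
      rw [neg_nim] at h1
      have h2 := ((equiv_iff' _ _).1 (hf i)).2
      rw [hi] at h2
      have h3 : mk l r L R ≤ L i := le_trans' (le_trans' ((equiv_iff' _ _).1 hneg).1 h1) h2
      have h4 : LF (L i) (mk l r L R) := (lf_iff' _ _).2 (Or.inl ⟨i, le_refl' _⟩)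
      exact (lf_iff_not_le _ _).1 h4 h3
  refine ⟨n, (equiv_iff' _ _).2 ⟨hG, (le_iff' _ _).2 ⟨fun i => ?_, fun j => ?_⟩⟩⟩
  · obtain ⟨a, ha, hi⟩ := nim_moveLeft _ i
    obtain ⟨k, hk, rfl⟩ := nat_of_lt n a ha
    obtain ⟨i', hi'⟩ := hmin k hk
    rw [hi]
    refine (lf_iff' _ _).2 (Or.inl ⟨i', ?_⟩)
    have := ((equiv_iff' _ _).1 (hf i')).2
    rw [hi'] at this
    exact this
  · rw [lf_iff_not_le]
    intro h
    have h1 : -nim (n : Ordinal) ≤ -(R j) := (neg_le_lf_iff (R j) _).1.2 h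
    rw [neg_nim] at h1
    have h2 : mk l r L R ≤ -(R j) := le_trans' hG h1
    rw [neg_mk] at hneg
    have h3 := ((le_iff' _ _).1 ((equiv_iff' _ _).1 hneg).2).1 j
    exact (lf_iff_not_le _ _).1 h3 h2

end SetTheory.PGame

/-- **Sprague–Grundy Theorem.** Every impartial game (a finite, loopfree game in which
both players always have the same available moves) is equivalent in normal play to
some Nim-heap `*m` with `m` a natural number. -/
theorem sprague_grundy (G : PGame.{0}) [G.Impartial] [G.Short] :
    ∃ m : ℕ, G ≈ nim (m : Ordinal) := by
  exact sg_aux G (inferInstance : G.Impartial).out inferInstance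
end

section
/- (Uniqueness of the reduced quotient of a bipartite monoid) Let (Q, P) be a bipartite monoid: Q a commutative monoid and P ⊆ Q a subset. Define x ρ y iff for all z ∈ Q, (x·z ∈ P ↔ y·z ∈ P); ρ is a monoid congruence on Q and the reduction (Q', P') is the quotient monoid Q/ρ together with P' = {[x]_ρ : x ∈ P}. Suppose (S, R) is a bipartite monoid and f : Q → S is a surjective monoid homomorphism such that for all x ∈ Q, x ∈ P if and only if f(x) ∈ R; let (S', R') be the reduction of (S, R) by the analogous congruence τ on S. Then there is a monoid isomorphism i : Q' → S' with i([x]_ρ) = [f(x)]_τ for all x ∈ Q, and for all x ∈ Q, [x]_ρ ∈ P' if and only if i([x]_ρ) ∈ R'. -/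
/-- The indistinguishability congruence of a bipartite monoid `(Q, P)`:
`x ρ y` iff for all `z`, `x * z ∈ P ↔ y * z ∈ P`. -/
def indisCon {Q : Type*} [CommMonoid Q] (P : Set Q) : Con Q where
  r x y := ∀ z, x * z ∈ P ↔ y * z ∈ P
  iseqv := ⟨fun _ _ => Iff.rfl, fun h z => (h z).symm, fun h1 h2 z => (h1 z).trans (h2 z)⟩
  mul' := by
    intro a b c d hab hcd z
    calc a * c * z ∈ P ↔ b * (c * z) ∈ P := by rw [mul_assoc]; exact hab (c * z)
      _ ↔ c * (b * z) ∈ P := by rw [mul_left_comm]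
      _ ↔ d * (b * z) ∈ P := hcd (b * z)
      _ ↔ b * d * z ∈ P := by rw [mul_left_comm, mul_assoc]

theorem key_iff {Q S : Type*} [CommMonoid Q] [CommMonoid S]
    (P : Set Q) (R : Set S) (f : Q →* S) (hf : Function.Surjective f)
    (hPR : ∀ x, x ∈ P ↔ f x ∈ R) (x y : Q) :
    indisCon P x y ↔ indisCon R (f x) (f y) := by
  constructor
  · intro h w
    obtain ⟨z, rfl⟩ := hf w
    rw [← f.map_mul, ← f.map_mul, ← hPR, ← hPR]
    exact h z
  · intro h z
    rw [hPR, hPR, f.map_mul, f.map_mul]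
    exact h (f z)

/-- **Uniqueness of the reduced quotient of a bipartite monoid.**  Let `(Q, P)` be a
bipartite monoid, with reduction `(Q', P') = (Q ⧸ ρ, image of P)` where `ρ` is the
indistinguishability congruence.  If `f : Q → S` is a surjective monoid homomorphism
onto a bipartite monoid `(S, R)` with `x ∈ P ↔ f x ∈ R` for all `x`, and `(S', R')` is
the reduction of `(S, R)` by the analogous congruence `τ`, then there is a monoid
isomorphism `i : Q' ≃* S'` with `i [x]_ρ = [f x]_τ`, and `[x]_ρ ∈ P'` iff
`i [x]_ρ ∈ R'`. -/
theorem reduced_quotient_unique {Q S : Type*} [CommMonoid Q] [CommMonoid S]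
    (P : Set Q) (R : Set S) (f : Q →* S) (hf : Function.Surjective f)
    (hPR : ∀ x, x ∈ P ↔ f x ∈ R) :
    ∃ i : (indisCon P).Quotient ≃* (indisCon R).Quotient,
      (∀ x : Q, i ((indisCon P).mk' x) = (indisCon R).mk' (f x)) ∧
      ∀ x : Q,
        ((indisCon P).mk' x ∈ (indisCon P).mk' '' P ↔
          i ((indisCon P).mk' x) ∈ (indisCon R).mk' '' R) := by

  have key : ∀ x y : Q, indisCon P x y ↔ indisCon R (f x) (f y) :=
    key_iff P R f hf hPR
  let g : (indisCon P).Quotient →* (indisCon R).Quotient :=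
    Con.lift _ ((indisCon R).mk'.comp f) (fun x y h => by
      simpa [Con.eq] using (key x y).mp h)
  have hg : ∀ x : Q, g ((indisCon P).mk' x) = (indisCon R).mk' (f x) := fun x => rfl
  have hbij : Function.Bijective g := by
    constructor
    · intro a b
      obtain ⟨x, rfl⟩ := Con.mk'_surjective a
      obtain ⟨y, rfl⟩ := Con.mk'_surjective b
      rw [hg, hg]
      intro h
      exact (Con.eq _).mpr ((key x y).mpr ((Con.eq _).mp h))
    · intro b
      obtain ⟨s, rfl⟩ := Con.mk'_surjective b
      obtain ⟨x, rfl⟩ := hf s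
      exact ⟨(indisCon P).mk' x, hg x⟩
  refine ⟨MulEquiv.ofBijective g hbij, fun x => hg x, fun x => ?_⟩
  simp only [MulEquiv.ofBijective_apply]
  rw [hg]
  constructor
  · rintro ⟨p, hp, hpx⟩
    refine ⟨f p, (hPR p).mp hp, ?_⟩
    exact (Con.eq _).mpr ((key p x).mp ((Con.eq _).mp hpx))
  · rintro ⟨r, hr, hrx⟩
    obtain ⟨p, rfl⟩ := hf r
    refine ⟨p, (hPR p).mpr hr, ?_⟩
    exact (Con.eq _).mpr ((key p x).mpr ((Con.eq _).mp hrx))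
end
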